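/- For every rooted tree T, the probability that Bernoulli(q)-site percolation on T contains a path from the root to a leaf equals p_T(q) = 1 - P_T(q, -1), for q ∈ [0,1]. -/

import Mathlib

open MvPolynomial

/-- A rooted tree: a root node together with a list of branches. -/
inductive RTree : Type
  | node : List RTree → RTree

/-- A rooted forest: a finite (possibly empty) list of rooted trees. -/
abbrev RForest : Type := List RTree

namespace RTree

/-- Number of vertices of a rooted tree. -/
def size : RTree → ℕ
  | .node ts => 1 + (ts.attach.map fun s => size s.1).sum

  decreasing_by
    all_goals
      simp only [RTree.node.sizeOf_spec]
      have := List.sizeOf_lt_of_mem s.2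
      omega

/-- Number of leaves of a rooted tree. -/
def leafCount : RTree → ℕ
  | .node [] => 1
  | .node (t :: ts) => ((t :: ts).attach.map fun s => leafCount s.1).sum

  decreasing_by
    all_goals
      simp only [RTree.node.sizeOf_spec]
      have := List.sizeOf_lt_of_mem s.2
      omega

/-- The bivariate generating polynomial `P_T(x,y)` of leaf-induced subtrees of `T`,
counted by number of vertices (`X 0`) and number of leaves (`X 1`). -/
noncomputable def Ptree : RTree → MvPolynomial (Fin 2) ℤ
  | .node [] => 1 + X 0 * X 1
  | .node (t :: ts) =>
      1 - X 0 + X 0 * ((t :: ts).attach.map fun s => Ptree s.1).prod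

  decreasing_by
    all_goals
      simp only [RTree.node.sizeOf_spec]
      have := List.sizeOf_lt_of_mem s.2
      omega

/-- The polynomial `p_T(x) = 1 - P_T(x,-1)`. -/
noncomputable def pPol (T : RTree) : Polynomial ℤ :=
  1 - MvPolynomial.aeval ![Polynomial.X, -1] (Ptree T)

/-- The bivariate generating polynomial `S_T(x,y)` of subtrees of `T` (empty or connected
containing the root), counted by vertices (`X 0`) and boundary vertices (`X 1`). -/
noncomputable def Stree : RTree → MvPolynomial (Fin 2) ℤ
  | .node ts => X 1 + X 0 * (ts.attach.map fun s => Stree s.1).prod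

  decreasing_by
    all_goals
      simp only [RTree.node.sizeOf_spec]
      have := List.sizeOf_lt_of_mem s.2
      omega

/-- The bivariate generating polynomial `A_T(x,y)` of admissible subtrees of `T`,
counted by vertices (`X 0`) and boundary vertices (`X 1`). -/
noncomputable def Atree : RTree → MvPolynomial (Fin 2) ℤ
  | .node [] => X 1
  | .node (t :: ts) =>
      X 1 + X 0 * ((t :: ts).attach.map fun s => Atree s.1).prod

  decreasing_by
    all_goals
      simp only [RTree.node.sizeOf_spec]
      have := List.sizeOf_lt_of_mem s.2
      omega

/-- The trivariate polynomial `M_T(x,y,z)` (with `x = X 0`, `y = X 1`, `z = X 2`). -/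
noncomputable def Mtree : RTree → MvPolynomial (Fin 3) ℤ
  | .node ts =>
      Polynomial.aeval (X 2) (pPol (.node ts)).divX +
        X 0 * ∑ i : Fin ts.length,
          Mtree (ts.get i) *
            ∏ j ∈ Finset.univ.erase i,
              MvPolynomial.rename Fin.castSucc (Atree (ts.get j))
  decreasing_by
    simp only [RTree.node.sizeOf_spec]
    have h : sizeOf (ts.get i) < sizeOf ts := List.sizeOf_lt_of_mem (List.get_mem ts i)
    omega

/-- Number of vertices in the stem of a rooted tree. -/
def stemCount : RTree → ℕ
  | .node [t] => 1 + stemCount t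
  | .node _ => 1

/-- Isomorphism of rooted trees. -/
def Iso : RTree → RTree → Prop
  | .node ts, .node us =>
      ∃ σ : Fin ts.length ≃ Fin us.length,
        ∀ i : Fin ts.length, Iso (ts.get i) (us.get (σ i))
  decreasing_by
    simp only [RTree.node.sizeOf_spec]
    have h : sizeOf (ts.get i) < sizeOf ts := List.sizeOf_lt_of_mem (List.get_mem ts i)
    omega

end RTree

namespace RForest

open RTree

/-- Number of vertices of a rooted forest. -/
def size (F : RForest) : ℕ := (F.map RTree.size).sum

/-- Number of leaves of a rooted forest. -/
def leafCount (F : RForest) : ℕ := (F.map RTree.leafCount).sum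

/-- The polynomial `P_F` of a rooted forest: product over components. -/
noncomputable def Pforest (F : RForest) : MvPolynomial (Fin 2) ℤ := (F.map Ptree).prod

/-- The polynomial `S_F` of a rooted forest: product over components. -/
noncomputable def Sforest (F : RForest) : MvPolynomial (Fin 2) ℤ := (F.map Stree).prod

/-- Number of vertices in the stem of a rooted forest (`0` unless the forest is a tree). -/
def stemCount : RForest → ℕ
  | [T] => RTree.stemCount T
  | _ => 0

/-- Isomorphism of rooted forests: a matching of the components by isomorphisms. -/
def Iso (F G : RForest) : Prop :=
  ∃ σ : Fin F.length ≃ Fin G.length,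
    ∀ i : Fin F.length, RTree.Iso (F.get i) (G.get (σ i))

end RForest


mutual
/-- The vertices of a rooted tree, addressed by their child-index paths from the root. -/
def posList : RTree → List (List ℕ)
  | .node ts => [] :: posListAux 0 ts

def posListAux : ℕ → List RTree → List (List ℕ)
  | _, [] => []
  | i, t :: ts => (posList t).map (List.cons i) ++ posListAux (i + 1) ts
end


set_option linter.unusedSectionVars false
set_option maxHeartbeats 1000000

section MuFramework

open scoped Classical

variable {α : Type*} [DecidableEq α]

noncomputable def mu (q : ℝ) (V : Finset α) (E : Finset α → Prop) : ℝ :=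
  ∑ S ∈ V.powerset.filter (fun S => E S), q ^ S.card * (1 - q) ^ (V.card - S.card)

theorem mu_congr {q : ℝ} {V : Finset α} {E E' : Finset α → Prop}
    (h : ∀ S ⊆ V, (E S ↔ E' S)) : mu q V E = mu q V E' := by
  unfold mu
  apply Finset.sum_congr _ (fun _ _ => rfl)
  apply Finset.filter_congr
  intro S hS
  simpa using h S (Finset.mem_powerset.mp hS)

theorem mu_true (q : ℝ) (V : Finset α) : mu q V (fun _ => True) = 1 := by
  unfold mu
  simp only [Finset.filter_true]
  have h := Finset.prod_add (fun _ : α => q) (fun _ : α => 1 - q) V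
  simp only [Finset.prod_const] at h
  have : ∀ S ∈ V.powerset, q ^ S.card * (1 - q) ^ (V.card - S.card)
      = q ^ S.card * (1 - q) ^ (V \ S).card := by
    intro S hS
    rw [Finset.card_sdiff_of_subset (Finset.mem_powerset.mp hS)]
  rw [Finset.sum_congr rfl this, ← h]
  simp

theorem mu_not (q : ℝ) (V : Finset α) (E : Finset α → Prop) :
    mu q V (fun S => ¬ E S) = 1 - mu q V E := by
  have h1 := mu_true q V
  unfold mu at *
  simp only [Finset.filter_true] at h1
  rw [eq_sub_iff_add_eq, add_comm, Finset.sum_filter, Finset.sum_filter,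
    ← Finset.sum_add_distrib]
  refine (Finset.sum_congr rfl fun S _ => ?_).trans h1
  by_cases h : E S <;> simp [h]

theorem sum_powerset_union {A B : Finset α} (hAB : Disjoint A B)
    (F : Finset α → Finset α → ℝ) :
    ∑ S ∈ (A ∪ B).powerset, F (S ∩ A) (S ∩ B)
      = ∑ a ∈ A.powerset, ∑ b ∈ B.powerset, F a b := by
  rw [← Finset.sum_product']
  apply Finset.sum_nbij' (fun S => (S ∩ A, S ∩ B)) (fun p => p.1 ∪ p.2)
  · intro S hS
    simp only [Finset.mem_product, Finset.mem_powerset]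
    exact ⟨Finset.inter_subset_right, Finset.inter_subset_right⟩
  · intro p hp
    simp only [Finset.mem_product, Finset.mem_powerset] at hp
    exact Finset.mem_powerset.mpr (Finset.union_subset_union hp.1 hp.2)
  · intro S hS
    have h := Finset.mem_powerset.mp hS
    rw [← Finset.inter_union_distrib_left, Finset.inter_eq_left.mpr h]
  · intro p hp
    simp only [Finset.mem_product, Finset.mem_powerset] at hp
    have h1 : p.1 ∩ A = p.1 := Finset.inter_eq_left.mpr hp.1
    have h2 : p.2 ∩ A = ∅ :=
      Finset.disjoint_iff_inter_eq_empty.mp (hAB.symm.mono_left hp.2)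
    have h3 : p.1 ∩ B = ∅ :=
      Finset.disjoint_iff_inter_eq_empty.mp (hAB.mono_left hp.1)
    have h4 : p.2 ∩ B = p.2 := Finset.inter_eq_left.mpr hp.2
    have e1 : (p.1 ∪ p.2) ∩ A = p.1 := by
      rw [Finset.union_inter_distrib_right, h1, h2, Finset.union_empty]
    have e2 : (p.1 ∪ p.2) ∩ B = p.2 := by
      rw [Finset.union_inter_distrib_right, h3, h4, Finset.empty_union]
    exact Prod.ext e1 e2
  · intro S hS; rfl

theorem mu_union {q : ℝ} {A B : Finset α} (hAB : Disjoint A B)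
    (E₁ E₂ : Finset α → Prop) :
    mu q (A ∪ B) (fun S => E₁ (S ∩ A) ∧ E₂ (S ∩ B)) = mu q A E₁ * mu q B E₂ := by
  unfold mu
  rw [Finset.sum_filter, Finset.sum_filter, Finset.sum_filter, Finset.sum_mul_sum,
    ← sum_powerset_union hAB
      (fun a b => (if E₁ a then q ^ a.card * (1 - q) ^ (A.card - a.card) else 0) *
        (if E₂ b then q ^ b.card * (1 - q) ^ (B.card - b.card) else 0))]
  apply Finset.sum_congr rfl
  intro S hS
  have hSsub := Finset.mem_powerset.mp hS
  have hsplit : S ∩ A ∪ S ∩ B = S := by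
    rw [← Finset.inter_union_distrib_left, Finset.inter_eq_left.mpr hSsub]
  have hdisj : Disjoint (S ∩ A) (S ∩ B) :=
    hAB.mono Finset.inter_subset_right Finset.inter_subset_right
  have hcard : (S ∩ A).card + (S ∩ B).card = S.card := by
    rw [← Finset.card_union_of_disjoint hdisj, hsplit]
  have hcardU : (A ∪ B).card = A.card + B.card := Finset.card_union_of_disjoint hAB
  have hA : (S ∩ A).card ≤ A.card := Finset.card_le_card Finset.inter_subset_right
  have hB : (S ∩ B).card ≤ B.card := Finset.card_le_card Finset.inter_subset_right
  have hpow : q ^ S.card = q ^ (S ∩ A).card * q ^ (S ∩ B).card := by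
    rw [← pow_add, hcard]
  have hpow2 : (1 - q) ^ ((A ∪ B).card - S.card)
      = (1 - q) ^ (A.card - (S ∩ A).card) * (1 - q) ^ (B.card - (S ∩ B).card) := by
    rw [← pow_add]
    congr 1
    omega
  by_cases h1 : E₁ (S ∩ A) <;> by_cases h2 : E₂ (S ∩ B) <;> simp [h1, h2]
  rw [hpow, hpow2]
  ring

theorem mu_image {q : ℝ} {V : Finset α} {φ : α → α} (hφ : Function.Injective φ)
    (E : Finset α → Prop) :
    mu q (V.image φ) E = mu q V (fun S => E (S.image φ)) := by
  unfold mu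
  rw [Finset.sum_filter, Finset.sum_filter]
  apply Finset.sum_nbij' (fun T => V.filter (fun a => φ a ∈ T)) (fun S => S.image φ)
  · intro T _
    exact Finset.mem_powerset.mpr (Finset.filter_subset _ _)
  · intro S hS
    exact Finset.mem_powerset.mpr (Finset.image_subset_image (Finset.mem_powerset.mp hS))
  · intro T hT
    have hT' := Finset.mem_powerset.mp hT
    ext x
    simp only [Finset.mem_image, Finset.mem_filter]
    constructor
    · rintro ⟨a, ⟨_, ha⟩, rfl⟩; exact ha
    · intro hx
      obtain ⟨a, haV, rfl⟩ := Finset.mem_image.mp (hT' hx)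
      exact ⟨a, ⟨haV, hx⟩, rfl⟩
  · intro S hS
    have hS' := Finset.mem_powerset.mp hS
    ext a
    simp only [Finset.mem_filter, Finset.mem_image]
    constructor
    · rintro ⟨haV, b, hbS, hba⟩
      rwa [← hφ hba]
    · intro haS
      exact ⟨hS' haS, a, haS, rfl⟩
  · intro T hT
    have hT' := Finset.mem_powerset.mp hT
    have himg : (V.filter (fun a => φ a ∈ T)).image φ = T := by
      ext x
      simp only [Finset.mem_image, Finset.mem_filter]
      constructor
      · rintro ⟨a, ⟨_, ha⟩, rfl⟩; exact ha
      · intro hx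
        obtain ⟨a, haV, rfl⟩ := Finset.mem_image.mp (hT' hx)
        exact ⟨a, ⟨haV, hx⟩, rfl⟩
    have hcard : (V.filter (fun a => φ a ∈ T)).card = T.card := by
      conv_rhs => rw [← himg]
      exact (Finset.card_image_of_injective _ hφ).symm
    simp only [himg, hcard, Finset.card_image_of_injective _ hφ]

theorem mu_single {q : ℝ} (a : α) : mu q ({a} : Finset α) (fun S => a ∈ S) = q := by
  unfold mu
  have hp : ({a} : Finset α).powerset = {∅, {a}} := by
    ext S
    simp [Finset.subset_singleton_iff]
  rw [hp]
  simp [Finset.filter_insert, Finset.filter_singleton]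

end MuFramework

section TreeLemmas

open scoped Classical
open RTree

theorem mem_posListAux {l : List ℕ} : ∀ (ts : List RTree) (k : ℕ),
    (l ∈ posListAux k ts ↔ ∃ i, ∃ h : i < ts.length, ∃ p ∈ posList ts[i], l = (k + i) :: p)
  | [], k => by simp [posListAux]
  | t :: ts, k => by
    simp only [posListAux, List.mem_append, List.mem_map]
    rw [mem_posListAux ts (k + 1)]
    constructor
    · rintro (⟨p, hp, rfl⟩ | ⟨i, h, p, hp, rfl⟩)
      · exact ⟨0, by simp, p, by simpa using hp, by simp⟩
      · refine ⟨i + 1, by simpa using h, p, by simpa using hp, ?_⟩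
        rw [show k + (i + 1) = k + 1 + i by omega]
    · rintro ⟨i, h, p, hp, rfl⟩
      cases i with
      | zero => exact Or.inl ⟨p, by simpa using hp, by simp⟩
      | succ j =>
        refine Or.inr ⟨j, by simpa using h, p, by simpa using hp, ?_⟩
        rw [show k + (j + 1) = k + 1 + j by omega]

theorem nil_mem_posList (T : RTree) : [] ∈ posList T := by
  cases T with
  | node ts => simp [posList]

theorem mem_posList {l : List ℕ} (ts : List RTree) :
    l ∈ posList (RTree.node ts) ↔
      l = [] ∨ ∃ i, ∃ h : i < ts.length, ∃ p ∈ posList ts[i], l = (0 + i) :: p := by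
  rw [posList, List.mem_cons, mem_posListAux ts 0]

theorem posList_prefix_closed : ∀ (T : RTree), ∀ p ∈ posList T, ∀ r, r <+: p → r ∈ posList T
  | .node ts => by
    intro p hp r hr
    rcases (mem_posList ts).mp hp with rfl | ⟨i, h, p', hp', rfl⟩
    · rw [List.prefix_nil.mp hr]
      exact nil_mem_posList _
    · cases r with
      | nil => exact nil_mem_posList _
      | cons j r' =>
        obtain ⟨rfl, hr'⟩ := List.cons_prefix_cons.mp hr
        exact (mem_posList ts).mpr (Or.inr
          ⟨i, h, r', posList_prefix_closed ts[i] p' hp' r' hr', rfl⟩)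
  decreasing_by
    simp only [RTree.node.sizeOf_spec]
    have := List.sizeOf_lt_of_mem (List.getElem_mem h)
    omega

theorem cons_injective (k : ℕ) : Function.Injective (List.cons k : List ℕ → List ℕ) := by
  intro a b h
  simpa using h

mutual

theorem tree_mu (q : ℝ) : ∀ (T : RTree),
    mu q (posList T).toFinset
      (fun S => ∃ p ∈ (posList T).toFinset, p ++ [0] ∉ (posList T).toFinset ∧
        ∀ r, r <+: p → r ∈ S)
    = 1 - MvPolynomial.aeval ![q, (-1 : ℝ)] (RTree.Ptree T)
  | .node [] => by
    have hV : (posList (RTree.node [])).toFinset = {([] : List ℕ)} := by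
      simp [posList, posListAux]
    rw [hV]
    have hE : mu q ({([] : List ℕ)} : Finset (List ℕ))
        (fun S => ∃ p ∈ ({([] : List ℕ)} : Finset (List ℕ)),
          p ++ [0] ∉ ({([] : List ℕ)} : Finset (List ℕ)) ∧ ∀ r, r <+: p → r ∈ S)
        = mu q {([] : List ℕ)} (fun S => ([] : List ℕ) ∈ S) := by
      apply mu_congr
      intro S _
      constructor
      · rintro ⟨p, hp, _, hpref⟩
        rw [Finset.mem_singleton] at hp
        subst hp
        exact hpref [] (List.prefix_refl _)
      · intro h
        refine ⟨[], Finset.mem_singleton_self _, by simp, ?_⟩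
        intro r hr
        rw [List.prefix_nil.mp hr]
        exact h
    rw [hE, mu_single]
    rw [show RTree.Ptree (RTree.node []) = 1 + MvPolynomial.X 0 * MvPolynomial.X 1 from by
      rw [RTree.Ptree]]
    simp
  | .node (t :: ts') => by
    have hV : (posList (RTree.node (t :: ts'))).toFinset
        = {([] : List ℕ)} ∪ (posListAux 0 (t :: ts')).toFinset := by
      rw [posList]
      simp [Finset.insert_eq, -Finset.singleton_union]
    have hdisj : Disjoint ({([] : List ℕ)} : Finset (List ℕ))
        (posListAux 0 (t :: ts')).toFinset := by
      rw [Finset.disjoint_left]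
      intro a ha haW
      rw [Finset.mem_singleton] at ha
      subst ha
      obtain ⟨i, h, p, _, hcons⟩ := (mem_posListAux (t :: ts') 0).mp
        (List.mem_toFinset.mp haW)
      exact absurd hcons (by simp)
    have hzero : [0] ∈ (posListAux 0 (t :: ts')).toFinset := by
      apply List.mem_toFinset.mpr
      exact (mem_posListAux (t :: ts') 0).mpr ⟨0, by simp, [], nil_mem_posList t, rfl⟩
    rw [hV]
    have hiff : ∀ S ⊆ ({([] : List ℕ)} : Finset (List ℕ)) ∪ (posListAux 0 (t :: ts')).toFinset,
        ((∃ p ∈ ({([] : List ℕ)} : Finset (List ℕ)) ∪ (posListAux 0 (t :: ts')).toFinset,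
            p ++ [0] ∉ ({([] : List ℕ)} : Finset (List ℕ)) ∪ (posListAux 0 (t :: ts')).toFinset ∧
            ∀ r, r <+: p → r ∈ S) ↔
          ((fun X => ([] : List ℕ) ∈ X) (S ∩ {([] : List ℕ)}) ∧
            (fun X => ∃ i, ∃ h : i < (t :: ts').length, ∃ p ∈ posList (t :: ts')[i],
              p ++ [0] ∉ posList (t :: ts')[i] ∧
              ∀ r, r <+: p → (0 + i) :: r ∈ X) (S ∩ (posListAux 0 (t :: ts')).toFinset))) := by
      intro S hS
      simp only []
      constructor
      · rintro ⟨p, hp, hleaf, hpref⟩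
        rcases Finset.mem_union.mp hp with hp1 | hp2
        · rw [Finset.mem_singleton] at hp1
          subst hp1
          exact absurd (Finset.mem_union_right _ hzero) hleaf
        · obtain ⟨i, h, p', hp', rfl⟩ := (mem_posListAux (t :: ts') 0).mp
            (List.mem_toFinset.mp hp2)
          refine ⟨Finset.mem_inter.mpr
            ⟨hpref [] List.nil_prefix, Finset.mem_singleton_self _⟩, i, h, p', hp', ?_, ?_⟩
          · intro hmem
            apply hleaf
            apply Finset.mem_union_right
            apply List.mem_toFinset.mpr
            exact (mem_posListAux (t :: ts') 0).mpr ⟨i, h, p' ++ [0], hmem, by simp⟩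
          · intro r hr
            refine Finset.mem_inter.mpr ⟨hpref ((0 + i) :: r) ?_, ?_⟩
            · exact List.cons_prefix_cons.mpr ⟨rfl, hr⟩
            · apply List.mem_toFinset.mpr
              exact (mem_posListAux (t :: ts') 0).mpr
                ⟨i, h, r, posList_prefix_closed _ p' hp' r hr, rfl⟩
      · rintro ⟨hnil, i, h, p', hp', hleaf, hpref⟩
        refine ⟨(0 + i) :: p', ?_, ?_, ?_⟩
        · apply Finset.mem_union_right
          apply List.mem_toFinset.mpr
          exact (mem_posListAux (t :: ts') 0).mpr ⟨i, h, p', hp', rfl⟩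
        · intro hmem
          rcases Finset.mem_union.mp hmem with h1 | h2
          · rw [Finset.mem_singleton] at h1
            exact absurd h1 (by simp)
          · obtain ⟨i', h', p'', hp'', hcons⟩ := (mem_posListAux (t :: ts') 0).mp
              (List.mem_toFinset.mp h2)
            injection hcons with hhead htail
            have hii : i' = i := by omega
            subst hii
            subst htail
            exact hleaf hp''
        · intro r hr
          cases r with
          | nil => exact (Finset.mem_inter.mp hnil).1
          | cons j r' =>
            obtain ⟨rfl, hr'⟩ := List.cons_prefix_cons.mp hr
            exact (Finset.mem_inter.mp (hpref r' hr')).1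
    rw [mu_congr hiff, mu_union hdisj (fun X => ([] : List ℕ) ∈ X)
      (fun X => ∃ i, ∃ h : i < (t :: ts').length, ∃ p ∈ posList (t :: ts')[i],
        p ++ [0] ∉ posList (t :: ts')[i] ∧ ∀ r, r <+: p → (0 + i) :: r ∈ X), mu_single]
    have hforest := forest_mu q (t :: ts') 0
    have hnot := mu_not q (posListAux 0 (t :: ts')).toFinset
      (fun X => ∃ i, ∃ h : i < (t :: ts').length,
        ∃ p ∈ posList (t :: ts')[i], p ++ [0] ∉ posList (t :: ts')[i] ∧
          ∀ r, r <+: p → (0 + i) :: r ∈ X)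
    have hmuE : mu q (posListAux 0 (t :: ts')).toFinset
        (fun X => ∃ i, ∃ h : i < (t :: ts').length, ∃ p ∈ posList (t :: ts')[i],
          p ++ [0] ∉ posList (t :: ts')[i] ∧ ∀ r, r <+: p → (0 + i) :: r ∈ X)
        = 1 - ((t :: ts').map fun s => MvPolynomial.aeval ![q, (-1 : ℝ)] (RTree.Ptree s)).prod := by
      rw [← hforest]
      linarith [hnot]
    rw [hmuE]
    have hP : MvPolynomial.aeval ![q, (-1 : ℝ)] (RTree.Ptree (RTree.node (t :: ts')))
        = 1 - q + q * ((t :: ts').map fun s =>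
            MvPolynomial.aeval ![q, (-1 : ℝ)] (RTree.Ptree s)).prod := by
      rw [show RTree.Ptree (RTree.node (t :: ts')) = 1 - MvPolynomial.X 0 +
          MvPolynomial.X 0 * ((t :: ts').attach.map fun s => RTree.Ptree s.1).prod from by
        rw [RTree.Ptree]]
      rw [map_add, map_sub, map_one, map_mul, MvPolynomial.aeval_X, map_list_prod]
      simp [List.map_map, Function.comp_def, List.attach_map_val]
    rw [hP]
    ring

theorem forest_mu (q : ℝ) : ∀ (ts : List RTree) (k : ℕ),
    mu q (posListAux k ts).toFinset
      (fun S => ¬ ∃ i, ∃ h : i < ts.length, ∃ p ∈ posList ts[i],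
        p ++ [0] ∉ posList ts[i] ∧ ∀ r, r <+: p → (k + i) :: r ∈ S)
    = ((ts.map fun s => MvPolynomial.aeval ![q, (-1 : ℝ)] (RTree.Ptree s)).prod)
  | [], k => by
    have hV : (posListAux k ([] : List RTree)).toFinset = (∅ : Finset (List ℕ)) := by
      simp [posListAux]
    rw [hV]
    unfold mu
    simp [Finset.filter_singleton]
  | t :: ts', k => by
    have hV : (posListAux k (t :: ts')).toFinset
        = (posList t).toFinset.image (List.cons k) ∪ (posListAux (k + 1) ts').toFinset := by
      rw [posListAux]
      ext x
      simp
    have hAB : Disjoint ((posList t).toFinset.image (List.cons k))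
        ((posListAux (k + 1) ts').toFinset) := by
      rw [Finset.disjoint_left]
      rintro a ha hb
      obtain ⟨p, hp, rfl⟩ := Finset.mem_image.mp ha
      obtain ⟨i, h, p', hp', hcons⟩ := (mem_posListAux ts' (k + 1)).mp (List.mem_toFinset.mp hb)
      injection hcons with h1 _
      omega
    rw [hV]
    have hiff : ∀ S ⊆ (posList t).toFinset.image (List.cons k) ∪ (posListAux (k + 1) ts').toFinset,
        ((¬ ∃ i, ∃ h : i < (t :: ts').length, ∃ p ∈ posList (t :: ts')[i],
            p ++ [0] ∉ posList (t :: ts')[i] ∧ ∀ r, r <+: p → (k + i) :: r ∈ S) ↔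
          ((fun X => ¬ ∃ p ∈ posList t, p ++ [0] ∉ posList t ∧ ∀ r, r <+: p → k :: r ∈ X)
              (S ∩ (posList t).toFinset.image (List.cons k)) ∧
            (fun X => ¬ ∃ i, ∃ h : i < ts'.length, ∃ p ∈ posList ts'[i],
              p ++ [0] ∉ posList ts'[i] ∧ ∀ r, r <+: p → (k + 1 + i) :: r ∈ X)
              (S ∩ (posListAux (k + 1) ts').toFinset))) := by
      intro S hS
      simp only []
      rw [← not_or]
      apply not_congr
      constructor
      · rintro ⟨i, h, p, hp, hleaf, hpref⟩
        cases i with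
        | zero =>
          refine Or.inl ⟨p, by simpa using hp, by simpa using hleaf, ?_⟩
          intro r hr
          refine Finset.mem_inter.mpr ⟨hpref r hr, ?_⟩
          exact Finset.mem_image.mpr ⟨r, List.mem_toFinset.mpr
            (posList_prefix_closed t p (by simpa using hp) r hr), rfl⟩
        | succ j =>
          refine Or.inr ⟨j, by simpa using h, p, by simpa using hp, by simpa using hleaf, ?_⟩
          intro r hr
          rw [show k + 1 + j = k + (j + 1) by omega]
          refine Finset.mem_inter.mpr ⟨hpref r hr, ?_⟩
          apply List.mem_toFinset.mpr
          apply (mem_posListAux ts' (k + 1)).mpr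
          refine ⟨j, by simpa using h, r, posList_prefix_closed _ p (by simpa using hp) r hr, ?_⟩
          rw [show k + 1 + j = k + (j + 1) by omega]
      · rintro (⟨p, hp, hleaf, hpref⟩ | ⟨j, h, p, hp, hleaf, hpref⟩)
        · refine ⟨0, by simp, p, by simpa using hp, by simpa using hleaf, ?_⟩
          intro r hr
          exact (Finset.mem_inter.mp (hpref r hr)).1
        · refine ⟨j + 1, by simpa using h, p, by simpa using hp, by simpa using hleaf, ?_⟩
          intro r hr
          have := (Finset.mem_inter.mp (hpref r hr)).1
          rwa [show k + 1 + j = k + (j + 1) by omega] at this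
    rw [mu_congr hiff, mu_union hAB
      (fun X => ¬ ∃ p ∈ posList t, p ++ [0] ∉ posList t ∧ ∀ r, r <+: p → k :: r ∈ X)
      (fun X => ¬ ∃ i, ∃ h : i < ts'.length, ∃ p ∈ posList ts'[i],
        p ++ [0] ∉ posList ts'[i] ∧ ∀ r, r <+: p → (k + 1 + i) :: r ∈ X)]
    have himg := mu_image (q := q) (V := (posList t).toFinset) (cons_injective k)
      (fun X => ¬ ∃ p ∈ posList t, p ++ [0] ∉ posList t ∧ ∀ r, r <+: p → k :: r ∈ X)
    rw [himg]
    have hcongr2 : mu q (posList t).toFinset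
        (fun S => ¬ ∃ p ∈ posList t, p ++ [0] ∉ posList t ∧
          ∀ r, r <+: p → k :: r ∈ S.image (List.cons k))
        = mu q (posList t).toFinset
          (fun S => ¬ ∃ p ∈ (posList t).toFinset, p ++ [0] ∉ (posList t).toFinset ∧
            ∀ r, r <+: p → r ∈ S) := by
      apply mu_congr
      intro S hS
      apply not_congr
      constructor
      · rintro ⟨p, hp, hleaf, hpref⟩
        refine ⟨p, List.mem_toFinset.mpr hp, by simpa using hleaf, ?_⟩
        intro r hr
        obtain ⟨a, haS, hak⟩ := Finset.mem_image.mp (hpref r hr)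
        have : a = r := by simpa using hak
        rwa [← this]
      · rintro ⟨p, hp, hleaf, hpref⟩
        refine ⟨p, List.mem_toFinset.mp hp, by simpa using hleaf, ?_⟩
        intro r hr
        exact Finset.mem_image.mpr ⟨r, hpref r hr, rfl⟩
    rw [hcongr2]
    have hnot := mu_not q (posList t).toFinset
      (fun S => ∃ p ∈ (posList t).toFinset, p ++ [0] ∉ (posList t).toFinset ∧
        ∀ r, r <+: p → r ∈ S)
    rw [hnot, tree_mu q t, forest_mu q ts' (k + 1)]
    simp [List.map_cons]

end

end TreeLemmas

open scoped Classical in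
theorem stmt7 (T : RTree) (q : ℝ) (hq : q ∈ Set.Icc (0 : ℝ) 1) :
    ∑ S ∈ ((posList T).toFinset.powerset.filter fun S =>
        ∃ p ∈ (posList T).toFinset, p ++ [0] ∉ (posList T).toFinset ∧
          ∀ r, r <+: p → r ∈ S),
      q ^ S.card * (1 - q) ^ ((posList T).toFinset.card - S.card) =
      1 - MvPolynomial.aeval ![q, (-1 : ℝ)] (RTree.Ptree T) := by
  have h := tree_mu q T
  unfold mu at h
  convert h using 3
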